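/- Let D be a nonempty finite type of samples, C a finite subset of D (the true-labeled samples) with τ = (|D| − |C|)/|D| the noise rate, and M : ℕ → Finset D a sequence with M_t ⊆ M_{t+1} for every t and with every sample of D eventually belonging to some M_t. Suppose moreover that for every t the set M_t ∩ C is nonempty and the growth-ratio condition |M_{t+1} \ C| · |M_t ∩ C| ≥ |M_{t+1} ∩ C| · |M_t \ C| holds. Then the memorization precision MP(t) = |M_t ∩ C| / |M_t| is monotone nonincreasing in t and tends to 1 − τ as t → ∞. -/

import Mathlib

/-- Full statement of Theorem 2: memorization precision MP(t) = |M_t ∩ C| / |M_t|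
is monotone nonincreasing and converges to 1 - τ, with τ = (|D| - |C|)/|D| the
noise rate, under nestedness, eventual memorization of all samples, and the
growth-ratio condition on memorized false- vs. true-labeled samples. -/
theorem memorization_precision_antitone_tendsto
    {D : Type*} [Fintype D] [Nonempty D] [DecidableEq D]
    (C : Finset D)
    (M : ℕ → Finset D)
    (hmono : ∀ t, M t ⊆ M (t + 1))
    (hev : ∀ x : D, ∃ t, x ∈ M t)
    (hne : ∀ t, (M t ∩ C).Nonempty)
    (hgrow : ∀ t, (M (t + 1) \ C).card * (M t ∩ C).card ≥
                  (M (t + 1) ∩ C).card * (M t \ C).card) :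
    Antitone (fun t => ((M t ∩ C).card : ℝ) / (M t).card) ∧
    Filter.Tendsto (fun t => ((M t ∩ C).card : ℝ) / (M t).card)
      Filter.atTop
      (nhds (1 - ((Fintype.card D : ℝ) - C.card) / Fintype.card D)) := by
  have hMmono : Monotone M := monotone_nat_of_le_succ hmono
  have hapos : ∀ t, 0 < ((M t ∩ C).card : ℝ) := by
    intro t
    exact_mod_cast (hne t).card_pos
  have hpos : ∀ t, 0 < ((M t).card : ℝ) := by
    intro t
    have : 0 < (M t).card :=
      lt_of_lt_of_le (hne t).card_pos (Finset.card_le_card Finset.inter_subset_left)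
    exact_mod_cast this
  have hant : Antitone (fun t => ((M t ∩ C).card : ℝ) / (M t).card) := by
    apply antitone_nat_of_succ_le
    intro t
    rw [div_le_div_iff₀ (hpos _) (hpos _)]
    have h0 : (M t ∩ C).card + (M t \ C).card = (M t).card :=
      Finset.card_inter_add_card_sdiff _ _
    have h1 : (M (t+1) ∩ C).card + (M (t+1) \ C).card = (M (t+1)).card :=
      Finset.card_inter_add_card_sdiff _ _
    have hg := hgrow t
    have hg' : ((M (t+1) ∩ C).card : ℝ) * (M t \ C).card ≤
        ((M (t+1) \ C).card : ℝ) * (M t ∩ C).card := by exact_mod_cast hg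
    have h0' : ((M t ∩ C).card : ℝ) + (M t \ C).card = (M t).card := by exact_mod_cast h0
    have h1' : ((M (t+1) ∩ C).card : ℝ) + (M (t+1) \ C).card = (M (t+1)).card := by
      exact_mod_cast h1
    nlinarith [hapos t, hapos (t+1)]
  refine ⟨hant, ?_⟩
  -- eventually M t = univ
  choose f hf using hev
  set T := Finset.univ.sup f with hT
  have huniv : ∀ t, T ≤ t → M t = Finset.univ := by
    intro t ht
    apply Finset.eq_univ_of_forall
    intro x
    exact hMmono (le_trans (Finset.le_sup (Finset.mem_univ x)) ht) (hf x)
  have hDpos : 0 < (Fintype.card D : ℝ) := by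
    exact_mod_cast Fintype.card_pos
  have hconst : (1 : ℝ) - ((Fintype.card D : ℝ) - C.card) / Fintype.card D =
      (C.card : ℝ) / Fintype.card D := by
    field_simp
    ring
  rw [hconst]
  apply Filter.Tendsto.congr' _ tendsto_const_nhds
  filter_upwards [Filter.eventually_ge_atTop T] with t ht
  rw [huniv t ht, Finset.univ_inter, Finset.card_univ]
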